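/- Assume additionally a, b > 0. Set ρ(z) = ∏ᵢ pᵢ(z), ρ̂(z) = Σᵢ cᵢ pᵢ′(z) ∏_{l≠i} p_l(z), D = deg ρ, and define the operator (Mf)(z) = ρ(z)[ (−a(1+z) + b(1−z)) f(z) + (1−z²) f′(z) ] + ρ̂(z)(1−z²) f(z). Write c−1⃗ for the exponent vector (c₁−1, …, c_N−1). Then M is banded with bandwidth D+1 in the generalized Jacobi hierarchy: ∫_{−1}^{1} w^{(a−1,b−1,c−1⃗)}(z) · (M P_n^{(a,b,c)})(z) · P_m^{(a−1,b−1,c−1⃗)}(z) dz = 0 unless n+1 ≤ m ≤ n+1+D. -/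

import Mathlib

open MeasureTheory Polynomial

/-- The generalized Jacobi weight `(1-z)^a (1+z)^b p₁(z)^{c₁} ⋯ p_N(z)^{c_N}`. -/
noncomputable def gjWeight (a b : ℝ) {N : ℕ} (c : Fin N → ℝ) (p : Fin N → Polynomial ℝ)
    (z : ℝ) : ℝ :=
  (1 - z) ^ a * (1 + z) ^ b * ∏ i, (p i).eval z ^ (c i)

/-- `P` is the sequence of orthonormal polynomials for the weight `w` on `(-1,1)`:
`deg P_k = k`, positive leading coefficients, and `⟨P_j, P_k⟩ = δ_{jk}`. -/
def IsONPolys (w : ℝ → ℝ) (P : ℕ → Polynomial ℝ) : Prop :=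
  (∀ k, (P k).degree = k) ∧ (∀ k, 0 < (P k).leadingCoeff) ∧
    ∀ j k, (∫ z in Set.Ioo (-1 : ℝ) 1, w z * (P j).eval z * (P k).eval z)
      = if j = k then (1 : ℝ) else 0

section Helpers
open Set

lemma gj_meas {N : ℕ} (a' b' : ℝ) (c' : Fin N → ℝ) (p : Fin N → Polynomial ℝ) (f : Polynomial ℝ) :
    Measurable (fun z : ℝ => gjWeight a' b' c' p z * f.eval z) := by
  unfold gjWeight
  fun_prop

lemma helper_mono {F g : ℝ → ℝ} {s : Set ℝ} (hs : MeasurableSet s)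
    (hg : IntegrableOn g s) (hF : AEStronglyMeasurable F (volume.restrict s))
    (hb : ∀ z ∈ s, ‖F z‖ ≤ ‖g z‖) : IntegrableOn F s :=
  Integrable.mono hg hF ((ae_restrict_iff' hs).mpr (ae_of_all _ hb))

lemma cont_prod_pow {N : ℕ} (c' : Fin N → ℝ) (p : Fin N → Polynomial ℝ)
    (hp : ∀ i, ∀ z ∈ Set.Icc (-1:ℝ) 1, 0 < (p i).eval z) :
    ContinuousOn (fun z : ℝ => ∏ i, (p i).eval z ^ (c' i)) (Set.Icc (-1:ℝ) 1) := by
  apply continuousOn_finset_prod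
  intro i _
  exact ((p i).continuous_aeval.continuousOn).rpow_const
    (fun z hz => Or.inl (hp i z hz).ne')

lemma integrableOn_gjWeight_mul {N : ℕ} (a' b' : ℝ) (ha' : -1 < a') (hb' : -1 < b')
    (c' : Fin N → ℝ) (p : Fin N → Polynomial ℝ)
    (hp : ∀ i, ∀ z ∈ Set.Icc (-1:ℝ) 1, 0 < (p i).eval z) (f : Polynomial ℝ) :
    IntegrableOn (fun z => gjWeight a' b' c' p z * f.eval z) (Set.Ioo (-1:ℝ) 1) := by
  have hmeas : AEStronglyMeasurable (fun z => gjWeight a' b' c' p z * f.eval z) volume := (gj_meas a' b' c' p f).aestronglyMeasurable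
  have hcont0 : ContinuousOn (fun z : ℝ => (∏ i, (p i).eval z ^ (c' i)) * f.eval z)
      (Set.Icc (-1:ℝ) 1) :=
    (cont_prod_pow c' p hp).mul f.continuous_aeval.continuousOn
  rw [show Set.Ioo (-1:ℝ) 1 = Set.Ioo (-1) 0 ∪ Set.Ico 0 1 from
    (Set.Ioo_union_Ico_eq_Ioo (by norm_num) (by norm_num)).symm]
  apply IntegrableOn.union
  · -- piece near -1 : dominate by C * (1+z)^b'
    have hg : IntegrableOn (fun z : ℝ => (1 + z) ^ b') (Set.Ioo (-1:ℝ) 0) := by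
      have h := (intervalIntegral.intervalIntegrable_rpow' (a := 0) (b := 1) hb').comp_add_left 1
      rw [intervalIntegrable_iff_integrableOn_Ioo_of_le (by norm_num)] at h
      simpa [add_comm] using h
    have hcont : ContinuousOn
        (fun z : ℝ => (1 - z) ^ a' * ((∏ i, (p i).eval z ^ (c' i)) * f.eval z))
        (Set.Icc (-1:ℝ) 0) := by
      apply ContinuousOn.mul
      · exact ((continuous_const.sub continuous_id).continuousOn).rpow_const
          (fun z hz => Or.inl (by simp only [Set.mem_Icc] at hz; simp only [Pi.sub_apply, id_eq]; intro h; linarith [hz.1, hz.2]))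
      · exact hcont0.mono (fun z hz => ⟨hz.1, by simp only [Set.mem_Icc] at hz ⊢; linarith [hz.2]⟩)
    obtain ⟨C, hC⟩ := isCompact_Icc.exists_bound_of_continuousOn hcont
    apply helper_mono measurableSet_Ioo (hg.const_mul C) (hmeas.restrict)
    intro z hz
    have hz' : z ∈ Set.Icc (-1:ℝ) 0 := ⟨hz.1.le, hz.2.le⟩
    have h1 : (0:ℝ) ≤ (1 + z) ^ b' := Real.rpow_nonneg (by simp only [Set.mem_Ioo] at hz; linarith) _
    have heq : gjWeight a' b' c' p z * f.eval z
        = ((1 - z) ^ a' * ((∏ i, (p i).eval z ^ (c' i)) * f.eval z)) * (1 + z) ^ b' := by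
      unfold gjWeight; ring
    rw [heq]
    have := hC z hz'
    calc ‖((1 - z) ^ a' * ((∏ i, (p i).eval z ^ (c' i)) * f.eval z)) * (1 + z) ^ b'‖
        = ‖(1 - z) ^ a' * ((∏ i, (p i).eval z ^ (c' i)) * f.eval z)‖ * ‖(1 + z) ^ b'‖ := norm_mul _ _
      _ ≤ C * ‖(1 + z) ^ b'‖ := by
          apply mul_le_mul_of_nonneg_right this (norm_nonneg _)
      _ ≤ ‖C * (1 + z) ^ b'‖ := by
          rw [norm_mul]
          exact mul_le_mul_of_nonneg_right (le_abs_self C) (norm_nonneg _)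
  · -- piece near 1 : dominate by C * (1-z)^a'
    rw [integrableOn_Ico_iff_integrableOn_Ioo]
    have hg : IntegrableOn (fun z : ℝ => (1 - z) ^ a') (Set.Ioo (0:ℝ) 1) := by
      have h := ((intervalIntegral.intervalIntegrable_rpow' (a := 0) (b := 1) ha').comp_sub_left 1).symm
      rw [intervalIntegrable_iff_integrableOn_Ioo_of_le (by norm_num)] at h
      simpa using h
    have hcont : ContinuousOn
        (fun z : ℝ => (1 + z) ^ b' * ((∏ i, (p i).eval z ^ (c' i)) * f.eval z))
        (Set.Icc (0:ℝ) 1) := by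
      apply ContinuousOn.mul
      · exact ((continuous_const.add continuous_id).continuousOn).rpow_const
          (fun z hz => Or.inl (by simp only [Set.mem_Icc] at hz; simp only [Pi.add_apply, id_eq]; intro h; linarith [hz.1, hz.2]))
      · exact hcont0.mono (fun z hz => ⟨by simp only [Set.mem_Icc] at hz ⊢; linarith [hz.1], hz.2⟩)
    obtain ⟨C, hC⟩ := isCompact_Icc.exists_bound_of_continuousOn hcont
    apply helper_mono measurableSet_Ioo (hg.const_mul C) (hmeas.restrict)
    intro z hz
    have hz' : z ∈ Set.Icc (0:ℝ) 1 := ⟨hz.1.le, hz.2.le⟩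
    have heq : gjWeight a' b' c' p z * f.eval z
        = ((1 + z) ^ b' * ((∏ i, (p i).eval z ^ (c' i)) * f.eval z)) * (1 - z) ^ a' := by
      unfold gjWeight; ring
    rw [heq]
    calc ‖((1 + z) ^ b' * ((∏ i, (p i).eval z ^ (c' i)) * f.eval z)) * (1 - z) ^ a'‖
        = ‖(1 + z) ^ b' * ((∏ i, (p i).eval z ^ (c' i)) * f.eval z)‖ * ‖(1 - z) ^ a'‖ := norm_mul _ _
      _ ≤ C * ‖(1 - z) ^ a'‖ := mul_le_mul_of_nonneg_right (hC z hz') (norm_nonneg _)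
      _ ≤ ‖C * (1 - z) ^ a'‖ := by
          rw [norm_mul]
          exact mul_le_mul_of_nonneg_right (le_abs_self C) (norm_nonneg _)

lemma span_rep (P : ℕ → Polynomial ℝ) (hdeg : ∀ k, (P k).degree = k)
    (hlc : ∀ k, 0 < (P k).leadingCoeff) :
    ∀ (d : ℕ) (q : Polynomial ℝ), q.degree ≤ (d : ℕ) →
      ∃ α : ℕ → ℝ, q = ∑ k ∈ Finset.range (d + 1), Polynomial.C (α k) * P k := by
  intro d
  induction d with
  | zero =>
    intro q hq
    have hq' : q = Polynomial.C (q.coeff 0) := Polynomial.eq_C_of_degree_le_zero (by exact_mod_cast hq)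
    have hP0 : P 0 = Polynomial.C ((P 0).coeff 0) :=
      Polynomial.eq_C_of_degree_le_zero (le_of_eq (by exact_mod_cast hdeg 0))
    have hne : (P 0).coeff 0 ≠ 0 := by
      have := hlc 0
      rw [Polynomial.leadingCoeff, Polynomial.natDegree_eq_of_degree_eq_some (by exact_mod_cast hdeg 0)] at this
      exact this.ne'
    refine ⟨fun _ => q.coeff 0 / (P 0).coeff 0, ?_⟩
    rw [Finset.sum_range_one]
    nth_rewrite 2 [hP0]
    rw [← Polynomial.C_mul, div_mul_cancel₀ _ hne, ← hq']
  | succ d ih =>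
    intro q hq
    have hlcP : (P (d + 1)).coeff (d + 1) ≠ 0 := by
      have := hlc (d + 1)
      rw [Polynomial.leadingCoeff, Polynomial.natDegree_eq_of_degree_eq_some (by exact_mod_cast hdeg (d+1))] at this
      exact this.ne'
    set γ := q.coeff (d + 1) / (P (d + 1)).coeff (d + 1) with hγ
    set r := q - Polynomial.C γ * P (d + 1) with hr
    have hrd : r.degree ≤ (d : ℕ) := by
      refine Polynomial.degree_le_iff_coeff_zero _ _ |>.mpr (fun m hm => ?_)
      have hm' : (d : WithBot ℕ) < (m : WithBot ℕ) := hm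
      have hdm : d < m := by exact_mod_cast hm'
      simp only [hr, Polynomial.coeff_sub, Polynomial.coeff_C_mul]
      rcases eq_or_lt_of_le (Nat.succ_le_of_lt hdm) with h | h
      · rw [← h, hγ, div_mul_cancel₀ _ hlcP, sub_self]
      · have h1 : q.coeff m = 0 := Polynomial.coeff_eq_zero_of_degree_lt
          (lt_of_le_of_lt hq (by exact_mod_cast h))
        have h2 : (P (d + 1)).coeff m = 0 := Polynomial.coeff_eq_zero_of_degree_lt
          (by rw [hdeg (d + 1)]; exact_mod_cast h)
        rw [h1, h2, mul_zero, sub_self]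
    obtain ⟨α, hα⟩ := ih r hrd
    refine ⟨Function.update α (d + 1) γ, ?_⟩
    rw [Finset.sum_range_succ, Function.update_self]
    have : ∑ k ∈ Finset.range (d + 1), Polynomial.C (Function.update α (d + 1) γ k) * P k
        = ∑ k ∈ Finset.range (d + 1), Polynomial.C (α k) * P k := by
      refine Finset.sum_congr rfl (fun k hk => ?_)
      rw [Function.update_of_ne (by simp at hk; omega)]
    rw [this, ← hα, hr]
    ring

lemma ortho_lower (w : ℝ → ℝ) (P : ℕ → Polynomial ℝ) (hP : IsONPolys w P)
    (hint : ∀ f : Polynomial ℝ, IntegrableOn (fun z => w z * f.eval z) (Set.Ioo (-1:ℝ) 1))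
    (q : Polynomial ℝ) (m : ℕ) (hq : q.degree < (m : ℕ)) :
    ∫ z in Set.Ioo (-1:ℝ) 1, w z * q.eval z * (P m).eval z = 0 := by
  obtain ⟨hdeg, hlc, horth⟩ := hP
  cases m with
  | zero =>
    have hq0 : q = 0 := by
      rw [← Polynomial.degree_eq_bot]
      exact Nat.WithBot.lt_zero_iff.mp (by exact_mod_cast hq)
    simp [hq0]
  | succ d =>
    have hqd : q.degree ≤ (d : ℕ) := by
      rcases eq_or_ne q 0 with h | h
      · simp [h]
      · rw [Polynomial.degree_eq_natDegree h] at hq ⊢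
        exact_mod_cast Nat.lt_succ_iff.mp (by exact_mod_cast hq)
    obtain ⟨α, hα⟩ := span_rep P hdeg hlc d q hqd
    have hrw : (fun z => w z * q.eval z * (P (d+1)).eval z)
        = fun z => ∑ k ∈ Finset.range (d+1), α k * (w z * (P k).eval z * (P (d+1)).eval z) := by
      funext z
      rw [hα]
      simp only [Polynomial.eval_finset_sum, Polynomial.eval_mul, Polynomial.eval_C,
        Finset.mul_sum, Finset.sum_mul]
      exact Finset.sum_congr rfl fun k _ => by ring
    rw [hrw, MeasureTheory.integral_finset_sum]
    · apply Finset.sum_eq_zero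
      intro k hk
      rw [MeasureTheory.integral_const_mul, horth k (d+1),
        if_neg (by simp at hk; omega), mul_zero]
    · intro k _
      have h2 : (fun z => α k * (w z * (P k).eval z * (P (d+1)).eval z))
          = fun z => w z * ((Polynomial.C (α k) * P k * P (d+1)).eval z) := by
        funext z; simp only [Polynomial.eval_mul, Polynomial.eval_C]; ring
      rw [h2]; exact hint _

lemma hasDerivAt_weight (a b : ℝ) {N : ℕ} (c : Fin N → ℝ) (p : Fin N → Polynomial ℝ)
    (f : Polynomial ℝ) (z : ℝ) (h1 : 0 < 1 - z) (h2 : 0 < 1 + z)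
    (hpz : ∀ i, 0 < (p i).eval z) :
    HasDerivAt (fun t => gjWeight a b c p t * f.eval t)
      (gjWeight (a-1) (b-1) (fun i => c i - 1) p z *
        (((∏ i, p i) * ((Polynomial.C (-a) * (1 + Polynomial.X) + Polynomial.C b * (1 - Polynomial.X)) * f
          + (1 - Polynomial.X ^ 2) * Polynomial.derivative f)
        + (∑ i, Polynomial.C (c i) * Polynomial.derivative (p i) * ∏ l ∈ Finset.univ.erase i, p l)
            * ((1 - Polynomial.X ^ 2) * f)).eval z)) z := by
  have hA : HasDerivAt (fun t : ℝ => (1 - t) ^ a) (a * (1 - z) ^ (a - 1) * (-1)) z := by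
    have h := Real.hasDerivAt_rpow_const (x := 1 - z) (p := a) (Or.inl h1.ne')
    have h' := HasDerivAt.comp z h ((hasDerivAt_id z).const_sub 1)
    simpa [Function.comp_def] using h'
  have hB : HasDerivAt (fun t : ℝ => (1 + t) ^ b) (b * (1 + z) ^ (b - 1) * 1) z := by
    have h := Real.hasDerivAt_rpow_const (x := 1 + z) (p := b) (Or.inl h2.ne')
    have h' := HasDerivAt.comp z h ((hasDerivAt_id z).const_add 1)
    simpa [Function.comp_def] using h'
  have hQ : ∀ i, HasDerivAt (fun t : ℝ => (p i).eval t ^ (c i))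
      (c i * (p i).eval z ^ (c i - 1) * (p i).derivative.eval z) z := by
    intro i
    have h := Real.hasDerivAt_rpow_const (x := (p i).eval z) (p := c i) (Or.inl (hpz i).ne')
    have h' := HasDerivAt.comp z h ((p i).hasDerivAt z)
    simpa [Function.comp_def] using h'
  have hPi : HasDerivAt (fun t : ℝ => ∏ i, (p i).eval t ^ (c i))
      (∑ i, (∏ j ∈ Finset.univ.erase i, (p j).eval z ^ (c j)) *
        (c i * (p i).eval z ^ (c i - 1) * (p i).derivative.eval z)) z := by
    simpa [smul_eq_mul] using HasDerivAt.fun_finsetProd (u := Finset.univ) (fun i _ => hQ i)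
  have hfull := ((hA.mul hB).mul hPi).mul (f.hasDerivAt z)
  have hgj : (fun t => gjWeight a b c p t * f.eval t)
      = fun t => ((1 - t) ^ a * (1 + t) ^ b * ∏ i, (p i).eval t ^ (c i)) * f.eval t := rfl
  rw [hgj]
  refine hfull.congr_deriv ?_
  unfold gjWeight
  simp only [Polynomial.eval_add, Polynomial.eval_mul, Polynomial.eval_sub, Polynomial.eval_one,
    Polynomial.eval_X, Polynomial.eval_C, Polynomial.eval_pow, Polynomial.eval_prod,
    Polynomial.eval_finset_sum, Polynomial.eval_neg, Pi.mul_apply]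
  have e1 : (1 - z) ^ a = (1 - z) ^ (a - 1) * (1 - z) := by
    rw [← Real.rpow_add_one h1.ne' (a - 1), sub_add_cancel]
  have e2 : (1 + z) ^ b = (1 + z) ^ (b - 1) * (1 + z) := by
    rw [← Real.rpow_add_one h2.ne' (b - 1), sub_add_cancel]
  have e3 : ∀ i, (p i).eval z ^ (c i) = (p i).eval z ^ (c i - 1) * (p i).eval z := fun i => by
    rw [← Real.rpow_add_one (hpz i).ne' (c i - 1), sub_add_cancel]
  have e4 : ∏ i, (p i).eval z ^ (c i) = (∏ i, (p i).eval z ^ (c i - 1)) * ∏ i, (p i).eval z := by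
    rw [← Finset.prod_mul_distrib]; exact Finset.prod_congr rfl fun i _ => e3 i
  have e5 : ∀ i : Fin N, ∏ j ∈ Finset.univ.erase i, (p j).eval z ^ (c j)
      = (∏ j ∈ Finset.univ.erase i, (p j).eval z ^ (c j - 1)) *
        ∏ j ∈ Finset.univ.erase i, (p j).eval z := fun i => by
    rw [← Finset.prod_mul_distrib]; exact Finset.prod_congr rfl fun j _ => e3 j
  have eS : ∑ i, (∏ j ∈ Finset.univ.erase i, (p j).eval z ^ (c j)) *
        (c i * (p i).eval z ^ (c i - 1) * (p i).derivative.eval z)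
      = (∏ j, (p j).eval z ^ (c j - 1)) *
        ∑ i, c i * (p i).derivative.eval z * ∏ l ∈ Finset.univ.erase i, (p l).eval z := by
    rw [Finset.mul_sum]
    refine Finset.sum_congr rfl fun i _ => ?_
    rw [e5 i, ← Finset.mul_prod_erase (Finset.univ) (fun j => (p j).eval z ^ (c j - 1))
      (Finset.mem_univ i)]
    ring
  rw [e1, e2, e4, eS]
  ring

lemma integral_weight_deriv_eq_zero (a b : ℝ) (ha0 : 0 < a) (hb0 : 0 < b) {N : ℕ}
    (c : Fin N → ℝ) (p : Fin N → Polynomial ℝ)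
    (hp : ∀ i, ∀ z ∈ Set.Icc (-1:ℝ) 1, 0 < (p i).eval z) (f : Polynomial ℝ) :
    ∫ z in Set.Ioo (-1:ℝ) 1, gjWeight (a-1) (b-1) (fun i => c i - 1) p z *
      (((∏ i, p i) * ((Polynomial.C (-a) * (1 + Polynomial.X) + Polynomial.C b * (1 - Polynomial.X)) * f
          + (1 - Polynomial.X ^ 2) * Polynomial.derivative f)
        + (∑ i, Polynomial.C (c i) * Polynomial.derivative (p i) * ∏ l ∈ Finset.univ.erase i, p l)
            * ((1 - Polynomial.X ^ 2) * f)).eval z) = 0 := by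
  set g := ((∏ i, p i) * ((Polynomial.C (-a) * (1 + Polynomial.X) + Polynomial.C b * (1 - Polynomial.X)) * f
          + (1 - Polynomial.X ^ 2) * Polynomial.derivative f)
        + (∑ i, Polynomial.C (c i) * Polynomial.derivative (p i) * ∏ l ∈ Finset.univ.erase i, p l)
            * ((1 - Polynomial.X ^ 2) * f)) with hg
  have hab : (-1:ℝ) < 1 := by norm_num
  set F := fun z : ℝ => gjWeight a b c p z * f.eval z with hF
  set F' := fun z : ℝ => gjWeight (a-1) (b-1) (fun i => c i - 1) p z * g.eval z with hF'
  have hderiv : ∀ x ∈ Set.Ioo (-1:ℝ) 1, HasDerivAt F (F' x) x := by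
    intro x hx
    obtain ⟨hx1, hx2⟩ := hx
    exact hasDerivAt_weight a b c p f x (by linarith) (by linarith)
      (fun i => hp i x ⟨hx1.le, hx2.le⟩)
  have hint : IntervalIntegrable F' volume (-1) 1 := by
    rw [intervalIntegrable_iff_integrableOn_Ioo_of_le hab.le]
    exact integrableOn_gjWeight_mul (a-1) (b-1) (by linarith) (by linarith) _ p hp g
  have hptend : ∀ x0 : ℝ, x0 ∈ Set.Icc (-1:ℝ) 1 →
      Filter.Tendsto (fun z : ℝ => (∏ i, (p i).eval z ^ (c i)) * f.eval z) (nhds x0)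
        (nhds ((∏ i, (p i).eval x0 ^ (c i)) * f.eval x0)) := by
    intro x0 hx0
    apply Filter.Tendsto.mul
    · apply tendsto_finset_prod
      intro i _
      exact Filter.Tendsto.comp
        (Real.continuousAt_rpow_const ((p i).eval x0) (c i) (Or.inl (hp i x0 hx0).ne'))
        ((p i).continuous.continuousAt)
    · exact f.continuous.continuousAt
  have htend1 : Filter.Tendsto F (nhdsWithin (-1:ℝ) (Set.Ioi (-1:ℝ))) (nhds 0) := by
    have t1 : Filter.Tendsto (fun z : ℝ => (1 - z) ^ a) (nhds (-1:ℝ)) (nhds ((1 - (-1:ℝ)) ^ a)) :=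
      ((Real.continuousAt_rpow_const _ _ (Or.inl (by norm_num))).comp
        ((continuous_const.sub continuous_id).continuousAt)).tendsto
    have t2 : Filter.Tendsto (fun z : ℝ => (1 + z) ^ b) (nhds (-1:ℝ)) (nhds ((1 + (-1:ℝ)) ^ b)) :=
      ((Real.continuousAt_rpow_const _ _ (Or.inr hb0.le)).comp
        ((continuous_const.add continuous_id).continuousAt)).tendsto
    have := ((t1.mul t2).mul (hptend (-1) (by norm_num)))
    have h0 : ((1 - (-1:ℝ)) ^ a * (1 + (-1:ℝ)) ^ b) * ((∏ i, (p i).eval (-1:ℝ) ^ (c i)) * f.eval (-1:ℝ)) = 0 := by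
      rw [show (1 + (-1:ℝ)) = 0 by norm_num, Real.zero_rpow hb0.ne']
      ring
    rw [h0] at this
    apply Filter.Tendsto.mono_left _ nhdsWithin_le_nhds
    convert this using 1
    funext z; unfold F; unfold gjWeight; ring
  have htend2 : Filter.Tendsto F (nhdsWithin (1:ℝ) (Set.Iio (1:ℝ))) (nhds 0) := by
    have t1 : Filter.Tendsto (fun z : ℝ => (1 - z) ^ a) (nhds (1:ℝ)) (nhds ((1 - (1:ℝ)) ^ a)) :=
      ((Real.continuousAt_rpow_const _ _ (Or.inr ha0.le)).comp
        ((continuous_const.sub continuous_id).continuousAt)).tendsto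
    have t2 : Filter.Tendsto (fun z : ℝ => (1 + z) ^ b) (nhds (1:ℝ)) (nhds ((1 + (1:ℝ)) ^ b)) :=
      ((Real.continuousAt_rpow_const _ _ (Or.inl (by norm_num))).comp
        ((continuous_const.add continuous_id).continuousAt)).tendsto
    have := ((t1.mul t2).mul (hptend 1 (by norm_num)))
    have h0 : ((1 - (1:ℝ)) ^ a * (1 + (1:ℝ)) ^ b) * ((∏ i, (p i).eval (1:ℝ) ^ (c i)) * f.eval (1:ℝ)) = 0 := by
      rw [show (1 - (1:ℝ)) = 0 by norm_num, Real.zero_rpow ha0.ne']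
      ring
    rw [h0] at this
    apply Filter.Tendsto.mono_left _ nhdsWithin_le_nhds
    convert this using 1
    funext z; unfold F; unfold gjWeight; ring
  have h0 := intervalIntegral.integral_eq_sub_of_hasDerivAt_of_tendsto hab hderiv hint htend1 htend2
  rw [intervalIntegral.integral_of_le hab.le, MeasureTheory.integral_Ioc_eq_integral_Ioo] at h0
  simpa using h0

lemma natDegree_M_le (a b : ℝ) {N : ℕ} (c : Fin N → ℝ) (p : Fin N → Polynomial ℝ)
    (hp0 : ∀ i, p i ≠ 0) (f : Polynomial ℝ) (n : ℕ) (hf : f.natDegree ≤ n) :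
    ((∏ i, p i) * ((Polynomial.C (-a) * (1 + Polynomial.X) + Polynomial.C b * (1 - Polynomial.X)) * f
          + (1 - Polynomial.X ^ 2) * Polynomial.derivative f)
        + (∑ i, Polynomial.C (c i) * Polynomial.derivative (p i) * ∏ l ∈ Finset.univ.erase i, p l)
            * ((1 - Polynomial.X ^ 2) * f)).natDegree
      ≤ n + 1 + (∏ i, p i).natDegree := by
  set D := (∏ i, p i).natDegree with hD
  have hDsum : D = ∑ i, (p i).natDegree := by
    rw [hD, Polynomial.natDegree_prod _ _ (fun i _ => hp0 i)]
  have h1X : (1 + Polynomial.X : Polynomial ℝ).natDegree ≤ 1 := by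
    refine (Polynomial.natDegree_add_le _ _).trans ?_
    simp [Polynomial.natDegree_X]
  have h1X' : (1 - Polynomial.X : Polynomial ℝ).natDegree ≤ 1 := by
    refine (Polynomial.natDegree_sub_le _ _).trans ?_
    simp [Polynomial.natDegree_X]
  have hX2 : (1 - Polynomial.X ^ 2 : Polynomial ℝ).natDegree ≤ 2 := by
    refine (Polynomial.natDegree_sub_le _ _).trans ?_
    simp [Polynomial.natDegree_X_pow]
  apply (Polynomial.natDegree_add_le _ _).trans
  apply max_le
  · -- first summand
    apply (Polynomial.natDegree_mul_le).trans
    have hG : ((Polynomial.C (-a) * (1 + Polynomial.X) + Polynomial.C b * (1 - Polynomial.X)) * f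
        + (1 - Polynomial.X ^ 2) * Polynomial.derivative f).natDegree ≤ n + 1 := by
      apply (Polynomial.natDegree_add_le _ _).trans
      apply max_le
      · apply (Polynomial.natDegree_mul_le).trans
        have : (Polynomial.C (-a) * (1 + Polynomial.X)
            + Polynomial.C b * (1 - Polynomial.X)).natDegree ≤ 1 := by
          apply (Polynomial.natDegree_add_le _ _).trans
          apply max_le
          · exact (Polynomial.natDegree_mul_le).trans
              (by simpa using h1X)
          · exact (Polynomial.natDegree_mul_le).trans
              (by simpa using h1X')
        omega
      · by_cases hdf : Polynomial.derivative f = 0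
        · simp [hdf]
        · have hn1 : 1 ≤ f.natDegree := by
            by_contra h
            have : f.natDegree = 0 := by omega
            have := Polynomial.natDegree_eq_zero.mp this
            obtain ⟨x, hx⟩ := this
            rw [← hx] at hdf
            simp at hdf
          apply (Polynomial.natDegree_mul_le).trans
          have := Polynomial.natDegree_derivative_le f
          omega
    omega
  · -- second summand
    rw [Finset.sum_mul]
    refine Polynomial.natDegree_sum_le_of_forall_le _ _ ?_
    intro i _
    by_cases hdi : Polynomial.derivative (p i) = 0
    · simp [hdi]
    · have hdegi : 1 ≤ (p i).natDegree := by
        by_contra h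
        have : (p i).natDegree = 0 := by omega
        obtain ⟨x, hx⟩ := Polynomial.natDegree_eq_zero.mp this
        rw [← hx] at hdi
        simp at hdi
      have herase : (∏ l ∈ Finset.univ.erase i, p l).natDegree
          = ∑ l ∈ Finset.univ.erase i, (p l).natDegree :=
        Polynomial.natDegree_prod _ _ (fun l _ => hp0 l)
      have hsum : (p i).natDegree + ∑ l ∈ Finset.univ.erase i, (p l).natDegree = D := by
        rw [hDsum]
        exact Finset.add_sum_erase Finset.univ (fun l => (p l).natDegree) (Finset.mem_univ i)
      apply (Polynomial.natDegree_mul_le).trans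
      have hb1 : (Polynomial.C (c i) * Polynomial.derivative (p i)
          * ∏ l ∈ Finset.univ.erase i, p l).natDegree
          ≤ ((p i).natDegree - 1) + ∑ l ∈ Finset.univ.erase i, (p l).natDegree := by
        apply (Polynomial.natDegree_mul_le).trans
        rw [herase]
        have : (Polynomial.C (c i) * Polynomial.derivative (p i)).natDegree
            ≤ (p i).natDegree - 1 := by
          apply (Polynomial.natDegree_mul_le).trans
          simpa using Polynomial.natDegree_derivative_le (p i)
        omega
      have hb2 : ((1 - Polynomial.X ^ 2) * f).natDegree ≤ 2 + n := by
        apply (Polynomial.natDegree_mul_le).trans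
        omega
      omega

lemma gj_split (a b : ℝ) {N : ℕ} (c : Fin N → ℝ) (p : Fin N → Polynomial ℝ) (z : ℝ)
    (h1 : 0 < 1 - z) (h2 : 0 < 1 + z) (hpz : ∀ i, 0 < (p i).eval z) :
    gjWeight a b c p z
      = gjWeight (a-1) (b-1) (fun i => c i - 1) p z * ((1 - z^2) * ∏ i, (p i).eval z) := by
  unfold gjWeight
  have e1 : (1 - z) ^ a = (1 - z) ^ (a - 1) * (1 - z) := by
    rw [← Real.rpow_add_one h1.ne' (a - 1), sub_add_cancel]
  have e2 : (1 + z) ^ b = (1 + z) ^ (b - 1) * (1 + z) := by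
    rw [← Real.rpow_add_one h2.ne' (b - 1), sub_add_cancel]
  have e3 : ∀ i, (p i).eval z ^ (c i) = (p i).eval z ^ (c i - 1) * (p i).eval z := fun i => by
    rw [← Real.rpow_add_one (hpz i).ne' (c i - 1), sub_add_cancel]
  have e4 : ∏ i, (p i).eval z ^ (c i) = (∏ i, (p i).eval z ^ (c i - 1)) * ∏ i, (p i).eval z := by
    rw [← Finset.prod_mul_distrib]; exact Finset.prod_congr rfl fun i _ => e3 i
  rw [e1, e2, e4]
  ring

end Helpers

/-- The adjoint-type operator
`M f = ρ [(-a(1+z) + b(1-z)) f + (1-z²) f'] + ρ̂ (1-z²) f` is banded with bandwidth `D+1`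
from the `(a,b,c)` basis to the `(a-1,b-1,c-1⃗)` basis:  its matrix entries vanish unless
`n+1 ≤ m ≤ n+1+D`. -/
theorem statement10 (a b : ℝ) (ha : -1 < a) (hb : -1 < b) (ha0 : 0 < a) (hb0 : 0 < b)
    (N : ℕ) (c : Fin N → ℝ)
    (p : Fin N → Polynomial ℝ) (hp : ∀ i, ∀ z ∈ Set.Icc (-1 : ℝ) 1, 0 < (p i).eval z)
    (P P' : ℕ → Polynomial ℝ)
    (hP : IsONPolys (gjWeight a b c p) P)
    (hP' : IsONPolys (gjWeight (a - 1) (b - 1) (fun i => c i - 1) p) P')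
    (ρ ρhat : Polynomial ℝ)
    (hρ : ρ = ∏ i, p i)
    (hρhat : ρhat = ∑ i, Polynomial.C (c i) * Polynomial.derivative (p i) *
      ∏ l ∈ Finset.univ.erase i, p l)
    (D : ℕ) (hD : D = ρ.natDegree)
    (M : Polynomial ℝ → Polynomial ℝ)
    (hM : ∀ f, M f =
      ρ * ((Polynomial.C (-a) * (1 + Polynomial.X) + Polynomial.C b * (1 - Polynomial.X)) * f
          + (1 - Polynomial.X ^ 2) * Polynomial.derivative f)
        + ρhat * ((1 - Polynomial.X ^ 2) * f)) :
    ∀ n m : ℕ, ¬(n + 1 ≤ m ∧ m ≤ n + 1 + D) →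
      (∫ z in Set.Ioo (-1 : ℝ) 1,
        gjWeight (a - 1) (b - 1) (fun i => c i - 1) p z
          * (M (P n)).eval z * (P' m).eval z) = 0 := by

  intro n m hnm
  have hint' : ∀ f : Polynomial ℝ, IntegrableOn
      (fun z => gjWeight (a-1) (b-1) (fun i => c i - 1) p z * f.eval z) (Set.Ioo (-1:ℝ) 1) :=
    fun f => integrableOn_gjWeight_mul _ _ (by linarith) (by linarith) _ p hp f
  have hint : ∀ f : Polynomial ℝ, IntegrableOn
      (fun z => gjWeight a b c p z * f.eval z) (Set.Ioo (-1:ℝ) 1) :=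
    fun f => integrableOn_gjWeight_mul _ _ ha hb _ p hp f
  have hp0 : ∀ i, p i ≠ 0 := by
    intro i h
    have := hp i 0 (by norm_num)
    rw [h] at this; simp at this
  by_cases h1 : n + 1 ≤ m
  · -- then m > n + 1 + D : degree argument
    have hm : n + 1 + D < m := by
      rcases Nat.lt_or_ge (n + 1 + D) m with h | h
      · exact h
      · exact absurd ⟨h1, h⟩ hnm
    have hdegM : (M (P n)).degree < (m : ℕ) := by
      have hn : (P n).natDegree ≤ n :=
        le_of_eq (Polynomial.natDegree_eq_of_degree_eq_some (hP.1 n))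
      have hnd : (M (P n)).natDegree ≤ n + 1 + D := by
        rw [hM, hρ, hρhat, hD, hρ]
        exact natDegree_M_le a b c p hp0 (P n) n hn
      calc (M (P n)).degree ≤ ((M (P n)).natDegree : WithBot ℕ) := Polynomial.degree_le_natDegree
        _ ≤ ((n + 1 + D : ℕ) : WithBot ℕ) := by exact_mod_cast hnd
        _ < (m : ℕ) := by exact_mod_cast hm
    exact ortho_lower _ P' hP' hint' (M (P n)) m hdegM
  · -- m ≤ n : integration by parts
    have hm : m ≤ n := by omega
    have h0 := integral_weight_deriv_eq_zero a b ha0 hb0 c p hp (P n * P' m)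
    have hu : (∏ i, p i) * ((Polynomial.C (-a) * (1 + Polynomial.X)
          + Polynomial.C b * (1 - Polynomial.X)) * (P n * P' m)
          + (1 - Polynomial.X ^ 2) * Polynomial.derivative (P n * P' m))
        + (∑ i, Polynomial.C (c i) * Polynomial.derivative (p i) * ∏ l ∈ Finset.univ.erase i, p l)
            * ((1 - Polynomial.X ^ 2) * (P n * P' m))
        = (M (P n)) * P' m
          + ((∏ i, p i) * ((1 - Polynomial.X ^ 2) * (P n * Polynomial.derivative (P' m)))) := by
      rw [hM (P n), hρ, hρhat, Polynomial.derivative_mul]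
      ring
    rw [hu] at h0
    have hI1 := hint' (M (P n) * P' m)
    have hI2 := hint' ((∏ i, p i) * ((1 - Polynomial.X ^ 2) * (P n * Polynomial.derivative (P' m))))
    have hadd : (∫ z in Set.Ioo (-1:ℝ) 1, gjWeight (a-1) (b-1) (fun i => c i - 1) p z *
          ((M (P n) * P' m
            + (∏ i, p i) * ((1 - Polynomial.X ^ 2) * (P n * Polynomial.derivative (P' m)))).eval z))
        = (∫ z in Set.Ioo (-1:ℝ) 1, gjWeight (a-1) (b-1) (fun i => c i - 1) p z *
            ((M (P n) * P' m).eval z))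
          + ∫ z in Set.Ioo (-1:ℝ) 1, gjWeight (a-1) (b-1) (fun i => c i - 1) p z *
            (((∏ i, p i) * ((1 - Polynomial.X ^ 2)
              * (P n * Polynomial.derivative (P' m)))).eval z) := by
      rw [← MeasureTheory.integral_add hI1 hI2]
      apply MeasureTheory.setIntegral_congr_fun measurableSet_Ioo
      intro z _
      dsimp only
      simp only [Polynomial.eval_add]
      ring
    rw [hadd] at h0
    have hzero2 : (∫ z in Set.Ioo (-1:ℝ) 1, gjWeight (a-1) (b-1) (fun i => c i - 1) p z *
        (((∏ i, p i) * ((1 - Polynomial.X ^ 2)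
          * (P n * Polynomial.derivative (P' m)))).eval z)) = 0 := by
      have hcongr : (∫ z in Set.Ioo (-1:ℝ) 1, gjWeight (a-1) (b-1) (fun i => c i - 1) p z *
          (((∏ i, p i) * ((1 - Polynomial.X ^ 2)
            * (P n * Polynomial.derivative (P' m)))).eval z))
          = ∫ z in Set.Ioo (-1:ℝ) 1, gjWeight a b c p z
            * (Polynomial.derivative (P' m)).eval z * (P n).eval z := by
        apply MeasureTheory.setIntegral_congr_fun measurableSet_Ioo
        intro z hz
        obtain ⟨hz1, hz2⟩ := hz
        dsimp only
        rw [gj_split a b c p z (by linarith) (by linarith) (fun i => hp i z ⟨hz1.le, hz2.le⟩)]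
        simp only [Polynomial.eval_mul, Polynomial.eval_sub, Polynomial.eval_one,
          Polynomial.eval_pow, Polynomial.eval_X, Polynomial.eval_prod]
        ring
      rw [hcongr]
      apply ortho_lower _ P hP hint (Polynomial.derivative (P' m)) n
      have hne : P' m ≠ 0 := by
        intro h
        have := hP'.1 m
        rw [h] at this
        simp [Polynomial.degree_zero] at this
      calc (Polynomial.derivative (P' m)).degree < (P' m).degree :=
            Polynomial.degree_derivative_lt hne
        _ = (m : ℕ) := hP'.1 m
        _ ≤ (n : ℕ) := by exact_mod_cast hm
    rw [hzero2, add_zero] at h0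
    rw [show (∫ z in Set.Ioo (-1 : ℝ) 1,
        gjWeight (a - 1) (b - 1) (fun i => c i - 1) p z
          * (M (P n)).eval z * (P' m).eval z)
      = ∫ z in Set.Ioo (-1:ℝ) 1, gjWeight (a-1) (b-1) (fun i => c i - 1) p z *
          ((M (P n) * P' m).eval z) from by
        apply MeasureTheory.setIntegral_congr_fun measurableSet_Ioo
        intro z _
        dsimp only
        simp only [Polynomial.eval_mul]
        ring]
    exact h0
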